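/- The Loneliness Spectrum Conjecture fails for n = 4: the positive integer speeds 8, 3, 11, 19 satisfy ML(8, 3, 11, 19) = 7/30, and 7/30 < 1/4, and there is no positive integer s with 7/30 = s/(4s+1). -/
import Mathlib


/-- `dnn x` is the distance from `x` to the nearest integer:
`dnn x = min_{m : ℤ} |x - m|`. -/
noncomputable def dnn (x : ℝ) : ℝ := ⨅ m : ℤ, |x - m|

/-- The maximum loneliness of speeds `v 0, …, v (n-1)`:
`ML v = sup_{t : ℝ} min_{i} dnn (t * v i)`. -/
noncomputable def ML {n : ℕ} (v : Fin n → ℝ) : ℝ := ⨆ t : ℝ, ⨅ i, dnn (t * v i)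

lemma dnn_bdd (x : ℝ) : BddBelow (Set.range fun m : ℤ => |x - m|) :=
  ⟨0, by rintro y ⟨m, rfl⟩; positivity⟩

lemma dnn_le (x : ℝ) (m : ℤ) : dnn x ≤ |x - m| := ciInf_le (dnn_bdd x) m

lemma dnn_nonneg (x : ℝ) : 0 ≤ dnn x := le_ciInf fun m => abs_nonneg _

lemma dnn_add_int (x : ℝ) (k : ℤ) : dnn (x + k) = dnn x := by
  apply le_antisymm
  · refine le_ciInf fun m => le_trans (dnn_le _ (m + k)) (le_of_eq ?_)
    push_cast; ring_nf
  · refine le_ciInf fun m => le_trans (dnn_le _ (m - k)) (le_of_eq ?_)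
    push_cast; ring_nf

lemma dnn_ge (x c : ℝ) (k : ℤ) (h1 : c ≤ x - k) (h2 : c ≤ (k + 1) - x) :
    c ≤ dnn x := by
  refine le_ciInf fun m => ?_
  rcases le_or_gt m k with h | h
  · have hm : (m : ℝ) ≤ k := by exact_mod_cast h
    calc c ≤ x - k := h1
    _ ≤ x - m := by linarith
    _ ≤ |x - m| := le_abs_self _
  · have hm : (k : ℝ) + 1 ≤ m := by exact_mod_cast h
    calc c ≤ (k + 1) - x := h2
    _ ≤ m - x := by linarith
    _ ≤ |x - m| := by rw [abs_sub_comm]; exact le_abs_self _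

lemma sp0 : (![(8 : ℝ), 3, 11, 19]) 0 = 8 := rfl
lemma sp1 : (![(8 : ℝ), 3, 11, 19]) 1 = 3 := rfl
lemma sp2 : (![(8 : ℝ), 3, 11, 19]) 2 = 11 := rfl
lemma sp3 : (![(8 : ℝ), 3, 11, 19]) 3 = 19 := rfl

set_option maxHeartbeats 2000000 in
lemma cover (u : ℝ) (h0 : 0 ≤ u) (h1 : u ≤ 1) :
    ∃ (i : Fin 4) (m : ℤ), |u * (![(8 : ℝ), 3, 11, 19]) i - m| ≤ 7 / 30 := by
  rcases le_or_gt u (23/330 : ℝ) with h | h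
  · exact ⟨1, 0, by rw [sp1]; rw [abs_le]; push_cast; constructor <;> linarith⟩
  rcases le_or_gt u (23/240 : ℝ) with h | h
  · exact ⟨2, 1, by rw [sp2]; rw [abs_le]; push_cast; constructor <;> linarith⟩
  rcases le_or_gt u (83/570 : ℝ) with h | h
  · exact ⟨0, 1, by rw [sp0]; rw [abs_le]; push_cast; constructor <;> linarith⟩
  rcases le_or_gt u (53/330 : ℝ) with h | h
  · exact ⟨3, 3, by rw [sp3]; rw [abs_le]; push_cast; constructor <;> linarith⟩
  rcases le_or_gt u (113/570 : ℝ) with h | h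
  · exact ⟨2, 2, by rw [sp2]; rw [abs_le]; push_cast; constructor <;> linarith⟩
  rcases le_or_gt u (53/240 : ℝ) with h | h
  · exact ⟨3, 4, by rw [sp3]; rw [abs_le]; push_cast; constructor <;> linarith⟩
  rcases le_or_gt u (23/90 : ℝ) with h | h
  · exact ⟨0, 2, by rw [sp0]; rw [abs_le]; push_cast; constructor <;> linarith⟩
  rcases le_or_gt u (233/570 : ℝ) with h | h
  · exact ⟨1, 1, by rw [sp1]; rw [abs_le]; push_cast; constructor <;> linarith⟩
  rcases le_or_gt u (13/30 : ℝ) with h | h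
  · exact ⟨3, 8, by rw [sp3]; rw [abs_le]; push_cast; constructor <;> linarith⟩
  rcases le_or_gt u (113/240 : ℝ) with h | h
  · exact ⟨2, 5, by rw [sp2]; rw [abs_le]; push_cast; constructor <;> linarith⟩
  rcases le_or_gt u (173/330 : ℝ) with h | h
  · exact ⟨0, 4, by rw [sp0]; rw [abs_le]; push_cast; constructor <;> linarith⟩
  rcases le_or_gt u (17/30 : ℝ) with h | h
  · exact ⟨2, 6, by rw [sp2]; rw [abs_le]; push_cast; constructor <;> linarith⟩
  rcases le_or_gt u (53/90 : ℝ) with h | h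
  · exact ⟨3, 11, by rw [sp3]; rw [abs_le]; push_cast; constructor <;> linarith⟩
  rcases le_or_gt u (173/240 : ℝ) with h | h
  · exact ⟨1, 2, by rw [sp1]; rw [abs_le]; push_cast; constructor <;> linarith⟩
  rcases le_or_gt u (443/570 : ℝ) with h | h
  · exact ⟨0, 6, by rw [sp0]; rw [abs_le]; push_cast; constructor <;> linarith⟩
  rcases le_or_gt u (263/330 : ℝ) with h | h
  · exact ⟨3, 15, by rw [sp3]; rw [abs_le]; push_cast; constructor <;> linarith⟩
  rcases le_or_gt u (473/570 : ℝ) with h | h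
  · exact ⟨2, 9, by rw [sp2]; rw [abs_le]; push_cast; constructor <;> linarith⟩
  rcases le_or_gt u (203/240 : ℝ) with h | h
  · exact ⟨3, 16, by rw [sp3]; rw [abs_le]; push_cast; constructor <;> linarith⟩
  rcases le_or_gt u (293/330 : ℝ) with h | h
  · exact ⟨0, 7, by rw [sp0]; rw [abs_le]; push_cast; constructor <;> linarith⟩
  rcases le_or_gt u (83/90 : ℝ) with h | h
  · exact ⟨2, 10, by rw [sp2]; rw [abs_le]; push_cast; constructor <;> linarith⟩
  exact ⟨1, 3, by rw [sp1]; rw [abs_le]; push_cast; constructor <;> linarith⟩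


lemma upper (t : ℝ) : (⨅ i, dnn (t * (![(8 : ℝ), 3, 11, 19]) i)) ≤ 7 / 30 := by
  set u := Int.fract t with hu
  obtain ⟨i, m, hm⟩ := cover u (Int.fract_nonneg t) (le_of_lt (Int.fract_lt_one t))
  have key : dnn (t * (![(8 : ℝ), 3, 11, 19]) i) ≤ 7 / 30 := by
    have hi : ∃ k : ℤ, (![(8 : ℝ), 3, 11, 19]) i = (k : ℝ) := by
      fin_cases i
      · exact ⟨8, by norm_num⟩
      · exact ⟨3, by norm_num⟩
      · exact ⟨11, by norm_num⟩
      · exact ⟨19, by norm_num⟩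
    obtain ⟨k, hk⟩ := hi
    have : t * (![(8 : ℝ), 3, 11, 19]) i = u * (![(8 : ℝ), 3, 11, 19]) i + (⌊t⌋ * k : ℤ) := by
      rw [hk]; push_cast
      have : u = t - ⌊t⌋ := by rfl
      rw [this]; ring
    rw [this, dnn_add_int]
    exact le_trans (dnn_le _ m) hm
  refine le_trans (ciInf_le ⟨0, ?_⟩ i) key
  rintro y ⟨j, rfl⟩; exact dnn_nonneg _

lemma lower : (7 : ℝ) / 30 ≤ ⨅ i, dnn ((13 / 30 : ℝ) * (![(8 : ℝ), 3, 11, 19]) i) := by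
  refine le_ciInf fun i => ?_
  fin_cases i
  · exact le_trans (le_of_eq (by norm_num)) (dnn_ge (13 / 30 * 8) (7 / 30) 3 (by norm_num) (by norm_num))
  · exact le_trans (le_of_eq (by norm_num)) (dnn_ge (13 / 30 * 3) (7 / 30) 1 (by norm_num) (by norm_num))
  · exact le_trans (le_of_eq (by norm_num)) (dnn_ge (13 / 30 * 11) (7 / 30) 4 (by norm_num) (by norm_num))
  · exact le_trans (le_of_eq (by norm_num)) (dnn_ge (13 / 30 * 19) (7 / 30) 8 (by norm_num) (by norm_num))

theorem stmt_1 :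
    ML ![(8 : ℝ), 3, 11, 19] = 7 / 30 ∧ (7 / 30 : ℝ) < 1 / 4 ∧
      ¬ ∃ s : ℕ, 0 < s ∧ (7 / 30 : ℝ) = (s : ℝ) / (4 * (s : ℝ) + 1) := by
  refine ⟨?_, by norm_num, ?_⟩
  · apply le_antisymm
    · exact ciSup_le upper
    · refine le_trans lower (le_ciSup (f := fun t : ℝ => ⨅ i, dnn (t * (![(8 : ℝ), 3, 11, 19]) i)) ⟨7 / 30, ?_⟩ (13 / 30 : ℝ))
      rintro y ⟨t, rfl⟩; exact upper t
  · rintro ⟨s, hs, heq⟩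
    have h1 : (0 : ℝ) < 4 * s + 1 := by positivity
    rw [div_eq_div_iff (by norm_num) h1.ne'] at heq
    have : (7 : ℕ) * (4 * s + 1) = 30 * s := by exact_mod_cast (by push_cast at heq ⊢; linarith : (7 : ℝ) * (4 * s + 1) = 30 * s)
    omega
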